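/- For u ∈ P((ℝ^m)*) and v ∈ P(ℝ^m), define ⟨⟨u,v⟩⟩ := |u₀(v₀)| / (‖u₀‖‖v₀‖) for any nonzero representatives u₀, v₀. Identifying u with the projectivized hyperplane ker(u₀) ⊂ P(ℝ^m), one has ⟨⟨u,v⟩⟩ ≤ d_P(u,v) ≤ 2⟨⟨u,v⟩⟩, where d_P(u,v) denotes the minimal projective distance from v to points of the hyperplane u. -/

import Mathlib

open RealInnerProductSpace

theorem angle_vs_projective_distance {m : ℕ} (hm : 2 ≤ m)
    (u₀ : EuclideanSpace ℝ (Fin m) →L[ℝ] ℝ) (hu : u₀ ≠ 0)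
    (v₀ : EuclideanSpace ℝ (Fin m)) (hv : v₀ ≠ 0) :
    |u₀ v₀| / (‖u₀‖ * ‖v₀‖) ≤
      sInf {r : ℝ | ∃ w : EuclideanSpace ℝ (Fin m), u₀ w = 0 ∧ ‖w‖ = 1 ∧
        ∃ t : ℝ, ‖t • v₀‖ = 1 ∧ r = ‖w - t • v₀‖} ∧
    sInf {r : ℝ | ∃ w : EuclideanSpace ℝ (Fin m), u₀ w = 0 ∧ ‖w‖ = 1 ∧
        ∃ t : ℝ, ‖t • v₀‖ = 1 ∧ r = ‖w - t • v₀‖} ≤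
      2 * (|u₀ v₀| / (‖u₀‖ * ‖v₀‖)) := by
  have hnu : (0:ℝ) < ‖u₀‖ := norm_pos_iff.mpr hu
  have hnv : (0:ℝ) < ‖v₀‖ := norm_pos_iff.mpr hv
  -- a unit vector in the kernel
  obtain ⟨z, hzker, hz0⟩ : ∃ z : EuclideanSpace ℝ (Fin m), u₀ z = 0 ∧ z ≠ 0 := by
    by_contra h
    push_neg at h
    have hinj : Function.Injective ((u₀ : EuclideanSpace ℝ (Fin m) →L[ℝ] ℝ) : EuclideanSpace ℝ (Fin m) →ₗ[ℝ] ℝ) := by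
      intro x y hxy
      have hx : u₀ (x - y) = 0 := by
        simp only [map_sub]
        simpa using sub_eq_zero.mpr hxy
      have := h (x - y) hx
      exact sub_eq_zero.mp this
    have := LinearMap.finrank_le_finrank_of_injective hinj
    simp [finrank_euclideanSpace_fin] at this
    omega
  set w₁ : EuclideanSpace ℝ (Fin m) := ‖z‖⁻¹ • z with hw₁def
  have hz : (0:ℝ) < ‖z‖ := norm_pos_iff.mpr hz0
  have hw₁ker : u₀ w₁ = 0 := by simp [hw₁def, hzker]
  have hw₁ : ‖w₁‖ = 1 := by
    rw [hw₁def, norm_smul, norm_inv, norm_norm]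
    field_simp
  have htv : ‖(‖v₀‖⁻¹ : ℝ) • v₀‖ = 1 := by
    rw [norm_smul, norm_inv, norm_norm]; field_simp
  have hbdd : BddBelow {r : ℝ | ∃ w : EuclideanSpace ℝ (Fin m), u₀ w = 0 ∧ ‖w‖ = 1 ∧
        ∃ t : ℝ, ‖t • v₀‖ = 1 ∧ r = ‖w - t • v₀‖} := by
    refine ⟨0, ?_⟩
    rintro r ⟨w, -, -, t, -, rfl⟩
    exact norm_nonneg _
  constructor
  · refine le_csInf ⟨‖w₁ - (‖v₀‖⁻¹ : ℝ) • v₀‖, ⟨w₁, hw₁ker, hw₁, ‖v₀‖⁻¹, htv, rfl⟩⟩ ?_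
    rintro r ⟨w, hwker, hw, t, ht, rfl⟩
    rw [norm_smul, Real.norm_eq_abs] at ht
    have key : |t| * |u₀ v₀| ≤ ‖u₀‖ * ‖w - t • v₀‖ := by
      have h1 : |u₀ (t • v₀)| = |t| * |u₀ v₀| := by
        rw [map_smul, smul_eq_mul, abs_mul]
      have h2 : u₀ (t • v₀) = u₀ (t • v₀ - w) := by simp [hwker]
      have h3 : |u₀ (t • v₀ - w)| ≤ ‖u₀‖ * ‖t • v₀ - w‖ := by
        simpa [Real.norm_eq_abs] using u₀.le_opNorm (t • v₀ - w)
      rw [norm_sub_rev] at h3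
      rw [← h1, h2]; exact h3
    rw [div_le_iff₀ (by positivity)]
    nlinarith [norm_nonneg (w - t • v₀), abs_nonneg (u₀ v₀), abs_nonneg t]
  · -- upper bound
    set a : EuclideanSpace ℝ (Fin m) := (InnerProductSpace.toDual ℝ _).symm u₀ with hadef
    have ha : ∀ x, ⟪a, x⟫ = u₀ x := fun x => InnerProductSpace.toDual_symm_apply
    have hna : ‖a‖ = ‖u₀‖ := (InnerProductSpace.toDual ℝ _).symm.norm_map u₀
    have hapos : (0:ℝ) < ‖a‖ := by rw [hna]; exact hnu
    set v' : EuclideanSpace ℝ (Fin m) := (‖v₀‖⁻¹ : ℝ) • v₀ with hv'def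
    have hv'1 : ‖v'‖ = 1 := htv
    set c : ℝ := u₀ v' with hcdef
    set p : EuclideanSpace ℝ (Fin m) := v' - (c / ‖a‖ ^ 2) • a with hpdef
    have hpker : u₀ p = 0 := by
      have h5 : (⟪a, (c / ‖a‖ ^ 2) • a⟫ : ℝ) = c := by
        rw [real_inner_smul_right, real_inner_self_eq_norm_sq]
        field_simp
      have : ⟪a, p⟫ = 0 := by
        rw [hpdef, inner_sub_right, h5, ha, ← hcdef, sub_self]
      rw [← ha]; exact this
    have hα : ‖v' - p‖ = |u₀ v₀| / (‖u₀‖ * ‖v₀‖) := by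
      have h1 : v' - p = (c / ‖a‖ ^ 2) • a := by rw [hpdef]; abel
      rw [h1, norm_smul, Real.norm_eq_abs, abs_div]
      have hc : |c| = |u₀ v₀| / ‖v₀‖ := by
        rw [hcdef, hv'def, map_smul, smul_eq_mul, abs_mul, abs_inv, abs_norm]
        ring
      rw [hc, abs_pow, abs_norm, hna]
      field_simp
    have hαnn : (0:ℝ) ≤ |u₀ v₀| / (‖u₀‖ * ‖v₀‖) := by positivity
    by_cases hp0 : p = 0
    · -- α = 1, use w₁
      have hα1 : |u₀ v₀| / (‖u₀‖ * ‖v₀‖) = 1 := by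
        rw [← hα, hp0, sub_zero, hv'1]
      refine le_trans (csInf_le hbdd ⟨w₁, hw₁ker, hw₁, ‖v₀‖⁻¹, htv, rfl⟩) ?_
      rw [hα1]
      calc ‖w₁ - (‖v₀‖⁻¹ : ℝ) • v₀‖ ≤ ‖w₁‖ + ‖(‖v₀‖⁻¹ : ℝ) • v₀‖ := norm_sub_le _ _
        _ = 2 * 1 := by rw [hw₁, htv]; norm_num
    · have hpp : (0:ℝ) < ‖p‖ := norm_pos_iff.mpr hp0
      set w' : EuclideanSpace ℝ (Fin m) := (‖p‖⁻¹ : ℝ) • p with hw'def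
      have hw'ker : u₀ w' = 0 := by simp [hw'def, hpker]
      have hw'1 : ‖w'‖ = 1 := by
        rw [hw'def, norm_smul, norm_inv, norm_norm]; field_simp
      refine le_trans (csInf_le hbdd ⟨w', hw'ker, hw'1, ‖v₀‖⁻¹, htv, rfl⟩) ?_
      have step1 : ‖w' - v'‖ ≤ |1 - ‖p‖| + ‖p - v'‖ := by
        calc ‖w' - v'‖ ≤ ‖w' - p‖ + ‖p - v'‖ := by
              have := norm_sub_le_norm_sub_add_norm_sub w' p v'
              exact this
          _ = |1 - ‖p‖| + ‖p - v'‖ := by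
              congr 1
              rw [hw'def]
              have : (‖p‖⁻¹ : ℝ) • p - p = (‖p‖⁻¹ - 1) • p := by
                rw [sub_smul, one_smul]
              rw [this, norm_smul, Real.norm_eq_abs]
              rw [← abs_norm p, ← abs_mul]
              congr 1
              field_simp
              rw [abs_norm]; ring
      have step2 : |1 - ‖p‖| ≤ ‖v' - p‖ := by
        have := abs_norm_sub_norm_le v' p
        rwa [hv'1] at this
      rw [norm_sub_rev p v'] at step1
      have : ‖w' - v'‖ ≤ 2 * (|u₀ v₀| / (‖u₀‖ * ‖v₀‖)) := by
        rw [← hα]; linarith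
      calc ‖w' - (‖v₀‖⁻¹:ℝ) • v₀‖ = ‖w' - v'‖ := by rw [hv'def]
        _ ≤ _ := this
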